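/- There exists a constant K' > 0 such that for all positive integers a, b with n = a + b + 1, n^{3/2}·P(a,b) ≤ K'·(a/n)^{−3/2}·(b/n)^{−3/2}, where P(a,b) = Cat(a)·Cat(b)/Cat(a+b+1) and Cat is the Catalan number sequence. -/

import Mathlib

/-- The profile probability `P(a,b) = Cat(a)Cat(b)/Cat(a+b+1)` as a real number. -/
noncomputable def lgP (a b : ℕ) : ℝ := (catalan a * catalan b : ℝ) / catalan (a + b + 1)

lemma sqrt_key (n : ℕ) :
    (2*(n:ℝ)+1) * Real.sqrt ((n:ℝ)+2) ≤ 2*((n:ℝ)+1) * Real.sqrt ((n:ℝ)+1) := by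
  have hn : (0:ℝ) ≤ (n:ℝ) := by positivity
  have h : ((2*(n:ℝ)+1)^2 * ((n:ℝ)+2)) ≤ (2*((n:ℝ)+1))^2 * ((n:ℝ)+1) := by nlinarith
  have h2 := Real.sqrt_le_sqrt h
  rwa [Real.sqrt_mul (by positivity), Real.sqrt_mul (by positivity),
    Real.sqrt_sq (by positivity), Real.sqrt_sq (by positivity)] at h2

lemma sqrt_key2 (n : ℕ) :
    2*((n:ℝ)+1) * Real.sqrt (n:ℝ) ≤ (2*(n:ℝ)+1) * Real.sqrt ((n:ℝ)+1) := by
  have hn : (0:ℝ) ≤ (n:ℝ) := by positivity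
  have h : ((2*((n:ℝ)+1))^2 * (n:ℝ)) ≤ (2*(n:ℝ)+1)^2 * ((n:ℝ)+1) := by nlinarith
  have h2 := Real.sqrt_le_sqrt h
  rwa [Real.sqrt_mul (by positivity), Real.sqrt_mul (by positivity),
    Real.sqrt_sq (by positivity), Real.sqrt_sq (by positivity)] at h2

lemma cb_upper : ∀ n : ℕ, (Nat.centralBinom n : ℝ) * Real.sqrt ((n:ℝ)+1) ≤ 4 ^ n := by
  intro n
  induction n with
  | zero => simp [Nat.centralBinom]
  | succ n ih =>
    have hrec : ((n:ℝ)+1) * ((Nat.centralBinom (n+1) : ℕ) : ℝ)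
        = 2*(2*(n:ℝ)+1) * (Nat.centralBinom n : ℝ) := by
      exact_mod_cast Nat.succ_mul_centralBinom_succ n
    have hcb : (0:ℝ) ≤ (Nat.centralBinom n : ℝ) := by positivity
    have hk := mul_le_mul_of_nonneg_left (sqrt_key n) hcb
    have hi := mul_le_mul_of_nonneg_left ih (by positivity : (0:ℝ) ≤ 2*((n:ℝ)+1))
    have hpos : (0:ℝ) < (n:ℝ)+1 := by positivity
    rw [← mul_le_mul_iff_right₀ hpos]
    push_cast
    have e : ((n:ℝ)+1) * (((Nat.centralBinom (n+1) : ℕ) : ℝ) * Real.sqrt ((n:ℝ)+1+1))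
        = 2*(2*(n:ℝ)+1) * (Nat.centralBinom n : ℝ) * Real.sqrt ((n:ℝ)+2) := by
      have h12 : (n:ℝ)+1+1 = (n:ℝ)+2 := by ring
      rw [h12]; linear_combination Real.sqrt ((n:ℝ)+2) * hrec
    have pw : (4:ℝ)^(n+1) = 4*4^n := by ring
    nlinarith [e, hk, hi, pw]

lemma cb_lower (n : ℕ) (hn : 1 ≤ n) :
    (4:ℝ) ^ n ≤ 2 * Real.sqrt (n:ℝ) * (Nat.centralBinom n : ℝ) := by
  induction n, hn using Nat.le_induction with
  | base => norm_num [Nat.centralBinom]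
  | succ n h1 ih =>
    have hrec : ((n:ℝ)+1) * ((Nat.centralBinom (n+1) : ℕ) : ℝ)
        = 2*(2*(n:ℝ)+1) * (Nat.centralBinom n : ℝ) := by
      exact_mod_cast Nat.succ_mul_centralBinom_succ n
    have hcb : (0:ℝ) ≤ (Nat.centralBinom n : ℝ) := by positivity
    have hk := mul_le_mul_of_nonneg_left (sqrt_key2 n) hcb
    have hi := mul_le_mul_of_nonneg_left ih (by positivity : (0:ℝ) ≤ 4*((n:ℝ)+1))
    have hpos : (0:ℝ) < (n:ℝ)+1 := by positivity
    rw [← mul_le_mul_iff_right₀ hpos]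
    push_cast
    have e : ((n:ℝ)+1) * (2 * Real.sqrt ((n:ℝ)+1) * ((Nat.centralBinom (n+1) : ℕ) : ℝ))
        = 2 * Real.sqrt ((n:ℝ)+1) * (2*(2*(n:ℝ)+1) * (Nat.centralBinom n : ℝ)) := by
      linear_combination 2 * Real.sqrt ((n:ℝ)+1) * hrec
    have pw : (4:ℝ)^(n+1) = 4*4^n := by ring
    nlinarith [e, hk, hi, pw]

lemma cat_pos (m : ℕ) : 0 < catalan m := by
  have h := succ_mul_catalan_eq_centralBinom m
  have hcb := Nat.centralBinom_pos m
  rcases Nat.eq_zero_or_pos (catalan m) with h0 | h1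
  · rw [h0, mul_zero] at h; omega
  · exact h1

theorem lgP_upper_bound :
    ∃ K' : ℝ, 0 < K' ∧ ∀ a b : ℕ, 0 < a → 0 < b →
      ∀ n : ℕ, n = a + b + 1 →
        (n : ℝ) ^ ((3 : ℝ) / 2) * lgP a b ≤
          K' * ((a : ℝ) / n) ^ (-(3 / 2) : ℝ) * ((b : ℝ) / n) ^ (-(3 / 2) : ℝ) := by
  refine ⟨1, one_pos, ?_⟩
  intro a b ha hb n hn
  subst hn
  have hA : (0:ℝ) < a := by exact_mod_cast ha
  have hB : (0:ℝ) < b := by exact_mod_cast hb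
  have hN : (0:ℝ) < (a:ℝ) + b + 1 := by positivity
  set N : ℝ := (a:ℝ) + (b:ℝ) + 1 with hNdef
  -- catalan facts
  have cat_eq : ∀ m : ℕ, ((m:ℝ)+1) * (catalan m : ℝ) = (Nat.centralBinom m : ℝ) := fun m => by
    exact_mod_cast succ_mul_catalan_eq_centralBinom m
  have hcatn : (0:ℝ) < (catalan (a+b+1) : ℝ) := by exact_mod_cast cat_pos (a+b+1)
  have hcata : (0:ℝ) < (catalan a : ℝ) := by exact_mod_cast cat_pos a
  have hcatb : (0:ℝ) < (catalan b : ℝ) := by exact_mod_cast cat_pos b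
  have mono : ∀ x y : ℝ, 0 ≤ x → x ≤ y → x * Real.sqrt x ≤ y * Real.sqrt y := by
    intro x y hx hxy
    exact mul_le_mul hxy (Real.sqrt_le_sqrt hxy) (Real.sqrt_nonneg _) (by linarith)
  -- upper bounds on catalan a, catalan b
  have u : ∀ m : ℕ, (catalan m : ℝ) * ((m:ℝ) * Real.sqrt m) ≤ 4 ^ m := by
    intro m
    have h1 := cb_upper m
    have h2 : (catalan m : ℝ) * (((m:ℝ)+1) * Real.sqrt ((m:ℝ)+1))
        = (Nat.centralBinom m : ℝ) * Real.sqrt ((m:ℝ)+1) := by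
      linear_combination Real.sqrt ((m:ℝ)+1) * (cat_eq m)
    have h3 : (catalan m : ℝ) * ((m:ℝ) * Real.sqrt m)
        ≤ (catalan m : ℝ) * (((m:ℝ)+1) * Real.sqrt ((m:ℝ)+1)) := by
      have := mono (m:ℝ) ((m:ℝ)+1) (by positivity) (by linarith)
      have hc : (0:ℝ) ≤ (catalan m : ℝ) := by positivity
      nlinarith
    linarith
  -- lower bound on catalan (a+b+1)
  have lo : (4:ℝ) ^ (a+b+1) ≤ 4 * (N * Real.sqrt N) * (catalan (a+b+1) : ℝ) := by
    have h1 := cb_lower (a+b+1) (by omega)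
    have hs : ((( a + b + 1 : ℕ)) : ℝ) = N := by push_cast; ring
    rw [hs] at h1
    have h2 := cat_eq (a+b+1)
    rw [hs] at h2
    have hsq : (0:ℝ) ≤ Real.sqrt N := Real.sqrt_nonneg _
    -- 4^n ≤ 2√N * cb = 2√N (N+1) cat ≤ 2√N (2N) cat
    have h3 : (2:ℝ) * Real.sqrt N * ((N+1) * (catalan (a+b+1) : ℝ))
        ≤ 2 * Real.sqrt N * (2*N * (catalan (a+b+1) : ℝ)) := by
      have : N + 1 ≤ 2*N := by rw [hNdef]; push_cast; nlinarith
      nlinarith [mul_nonneg (mul_nonneg (by norm_num : (0:ℝ) ≤ 2) hsq) hcatn.le]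
    calc (4:ℝ) ^ (a+b+1) ≤ 2 * Real.sqrt N * (Nat.centralBinom (a+b+1) : ℝ) := h1
      _ = 2 * Real.sqrt N * ((N+1) * (catalan (a+b+1) : ℝ)) := by rw [h2]
      _ ≤ 2 * Real.sqrt N * (2*N * (catalan (a+b+1) : ℝ)) := h3
      _ = 4 * (N * Real.sqrt N) * (catalan (a+b+1) : ℝ) := by ring
  -- key inequality
  have pw : (4:ℝ)^(a+b+1) = 4^a * 4^b * 4 := by ring
  have key : (catalan a : ℝ) * (catalan b : ℝ) * (((a:ℝ) * Real.sqrt a) * ((b:ℝ) * Real.sqrt b))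
      ≤ (N * Real.sqrt N) * (catalan (a+b+1) : ℝ) := by
    have h1 := mul_le_mul (u a) (u b)
      (by positivity) (by positivity)
    nlinarith [h1, lo, pw]
  -- rpow conversions
  have r32 : ∀ x : ℝ, 0 ≤ x → x ^ ((3:ℝ)/2) = x * Real.sqrt x := by
    intro x hx
    rw [show (3:ℝ)/2 = 1 + 1/2 by norm_num, Real.rpow_add' hx (by norm_num), Real.rpow_one,
      ← Real.sqrt_eq_rpow]
  have hneg : ∀ x : ℝ, 0 < x → (x/N) ^ (-(3/2) : ℝ) = (N/x) ^ ((3:ℝ)/2) := by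
    intro x hxp
    rw [Real.rpow_neg (by positivity), ← Real.inv_rpow (by positivity), inv_div]
  have hcastN : ((( a + b + 1 : ℕ)) : ℝ) = N := by push_cast; ring
  rw [one_mul, hcastN, hneg _ hA, hneg _ hB, Real.div_rpow hN.le hA.le, Real.div_rpow hN.le hB.le,
    r32 N hN.le, r32 _ hA.le, r32 _ hB.le, div_mul_div_comm, le_div_iff₀]
  · have hfin : lgP a b * (((a:ℝ) * Real.sqrt a) * ((b:ℝ) * Real.sqrt b)) ≤ N * Real.sqrt N := by
      rw [lgP, div_mul_eq_mul_div, div_le_iff₀ hcatn]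
      push_cast
      nlinarith [key]
    have hSN : (0:ℝ) ≤ N * Real.sqrt N := by positivity
    nlinarith [mul_le_mul_of_nonneg_left hfin hSN]
  · exact mul_pos (mul_pos hA (Real.sqrt_pos.mpr hA)) (mul_pos hB (Real.sqrt_pos.mpr hB))
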